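/- arXiv:1310.3052 — 2 statements merged into one kernel-verified Lean document; each statement's English description precedes it below -/
import Mathlib

section
/- Let λ : (0,∞) → ℝ be continuous and let γ < 1 be a real number. Suppose P_γ(x,y) and P_0(x,y) are both defined for all reals 0 < x ≤ y, take values in (0,1], satisfy P(x,x)=1, the semigroup property P(x,y) = P(x,z)·P(z,y) for 0 < x ≤ z ≤ y, and continuity of x ↦ P(x,y) on (0,y] for each fixed y; and that as h ↓ 0, P_γ(x,x+h) = 1 − (λ(x)/(1−γ))·h + o(h) while P_0(x,x+h) = 1 − λ(x)·h + o(h) for every x > 0. Then P_γ(x,y) = (P_0(x,y))^{1/(1−γ)} for all 0 < x ≤ y. -/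
open Filter Asymptotics Set
open scoped Topology

private lemma aux_log (Q : ℝ → ℝ) (c : ℝ)
    (hexp : (fun h : ℝ => Q h - (1 - c * h)) =o[𝓝[>] (0:ℝ)] (fun h : ℝ => h)) :
    (fun h : ℝ => Real.log (Q h) + c * h) =o[𝓝[>] (0:ℝ)] (fun h : ℝ => h) := by
  have hE : (fun h : ℝ => Q h - 1) =O[𝓝[>] (0:ℝ)] (fun h : ℝ => h) := by
    have h1 : (fun h : ℝ => -c * h) =O[𝓝[>] (0:ℝ)] (fun h : ℝ => h) :=
      (isBigO_refl (fun h : ℝ => h) _).const_mul_left (-c)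
    have := hexp.isBigO.add h1
    refine this.congr' (Eventually.of_forall fun h => by ring) EventuallyEq.rfl
  have h0 : Tendsto (fun h : ℝ => h) (𝓝[>] (0:ℝ)) (𝓝 0) :=
    tendsto_id.mono_left nhdsWithin_le_nhds
  have hQ1 : Tendsto Q (𝓝[>] (0:ℝ)) (𝓝 1) := by
    have h2 : Tendsto (fun h : ℝ => Q h - 1) (𝓝[>] (0:ℝ)) (𝓝 0) :=
      hE.trans_tendsto h0
    have := h2.add_const 1
    simpa using this
  have hlog : HasDerivAt Real.log 1 1 := by
    simpa using Real.hasDerivAt_log one_ne_zero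
  have hlo : (fun x : ℝ => Real.log x - (x - 1)) =o[𝓝 (1:ℝ)] (fun x : ℝ => x - 1) := by
    have h := hasDerivAt_iff_isLittleO.1 hlog
    simpa using h
  have hcomp : (fun h : ℝ => Real.log (Q h) - (Q h - 1)) =o[𝓝[>] (0:ℝ)]
      (fun h : ℝ => Q h - 1) := hlo.comp_tendsto hQ1
  have hmain := (hcomp.trans_isBigO hE).add hexp
  refine hmain.congr' (Eventually.of_forall fun h => by ring) EventuallyEq.rfl

private lemma aux_deriv (P : ℝ → ℝ → ℝ) (c : ℝ → ℝ)
    (hpos : ∀ x y : ℝ, 0 < x → x ≤ y → 0 < P x y)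
    (hsemi : ∀ x z y : ℝ, 0 < x → x ≤ z → z ≤ y → P x y = P x z * P z y)
    (hexp : ∀ x : ℝ, 0 < x →
      (fun h : ℝ => P x (x + h) - (1 - c x * h)) =o[𝓝[>] (0:ℝ)] (fun h : ℝ => h))
    (y t : ℝ) (ht : 0 < t) (hty : t < y) :
    HasDerivWithinAt (fun u => Real.log (P u y)) (c t) (Ici t) t := by
  rw [← hasDerivWithinAt_Ioi_iff_Ici, hasDerivWithinAt_iff_isLittleO]
  have hlog := aux_log (fun h => P t (t + h)) (c t) (hexp t ht)
  have htend : Tendsto (fun u : ℝ => u - t) (𝓝[Ioi t] t) (𝓝[>] (0:ℝ)) := by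
    rw [tendsto_nhdsWithin_iff]
    constructor
    · have : Tendsto (fun u : ℝ => u - t) (𝓝 t) (𝓝 (t - t)) :=
        (continuous_id.sub continuous_const).tendsto t
      simpa using this.mono_left nhdsWithin_le_nhds
    · filter_upwards [eventually_mem_nhdsWithin] with u hu
      exact sub_pos.2 (mem_Ioi.1 hu)
  have hcomp := (hlog.comp_tendsto htend).neg_left
  refine hcomp.congr' ?_ EventuallyEq.rfl
  filter_upwards [Ioo_mem_nhdsGT hty] with u hu
  have hp1 : 0 < P t u := hpos t u ht hu.1.le
  have hp2 : 0 < P u y := hpos u y (ht.trans hu.1) hu.2.le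
  have hsplit : Real.log (P t y) = Real.log (P t u) + Real.log (P u y) := by
    rw [hsemi t u y ht hu.1.le hu.2.le, Real.log_mul hp1.ne' hp2.ne']
  have ht' : t + (u - t) = u := by ring
  simp only [Function.comp, ht', hsplit, smul_eq_mul]
  ring

/-- Deterministic formulation of the power identity of Theorem 3.1:
if `P_γ` and `P_0` are multiplicative kernels with excursion-rate expansions
`1 - (λ(x)/(1-γ)) h + o(h)` and `1 - λ(x) h + o(h)` respectively, then
`P_γ(x,y) = P_0(x,y)^{1/(1-γ)}`. -/
theorem stmt_2 (lam : ℝ → ℝ) (γ : ℝ) (hγ : γ < 1) (Pγ P₀ : ℝ → ℝ → ℝ)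
    (hlam : ContinuousOn lam (Set.Ioi 0))
    (hPγpos : ∀ x y : ℝ, 0 < x → x ≤ y → 0 < Pγ x y)
    (hPγle : ∀ x y : ℝ, 0 < x → x ≤ y → Pγ x y ≤ 1)
    (hP₀pos : ∀ x y : ℝ, 0 < x → x ≤ y → 0 < P₀ x y)
    (hP₀le : ∀ x y : ℝ, 0 < x → x ≤ y → P₀ x y ≤ 1)
    (hγdiag : ∀ x : ℝ, 0 < x → Pγ x x = 1)
    (h₀diag : ∀ x : ℝ, 0 < x → P₀ x x = 1)
    (hγsemi : ∀ x z y : ℝ, 0 < x → x ≤ z → z ≤ y → Pγ x y = Pγ x z * Pγ z y)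
    (h₀semi : ∀ x z y : ℝ, 0 < x → x ≤ z → z ≤ y → P₀ x y = P₀ x z * P₀ z y)
    (hγcont : ∀ y : ℝ, 0 < y → ContinuousOn (fun x => Pγ x y) (Set.Ioc 0 y))
    (h₀cont : ∀ y : ℝ, 0 < y → ContinuousOn (fun x => P₀ x y) (Set.Ioc 0 y))
    (hγexp : ∀ x : ℝ, 0 < x →
      (fun h : ℝ => Pγ x (x + h) - (1 - lam x / (1 - γ) * h)) =o[𝓝[>] (0:ℝ)]
        (fun h : ℝ => h))
    (h₀exp : ∀ x : ℝ, 0 < x →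
      (fun h : ℝ => P₀ x (x + h) - (1 - lam x * h)) =o[𝓝[>] (0:ℝ)]
        (fun h : ℝ => h)) :
    ∀ x y : ℝ, 0 < x → x ≤ y → Pγ x y = P₀ x y ^ ((1:ℝ) / (1 - γ)) := by
  intro x y hx hxy
  rcases eq_or_lt_of_le hxy with rfl | hlt
  · simp [hγdiag x hx, h₀diag x hx]
  have hy : 0 < y := hx.trans hlt
  have h1γ : (0:ℝ) < 1 - γ := by linarith
  set r : ℝ := (1:ℝ) / (1 - γ) with hr
  set F : ℝ → ℝ := fun u => Real.log (Pγ u y) - r * Real.log (P₀ u y) with hF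
  have hsub : Icc x y ⊆ Ioc 0 y := fun u hu => ⟨hx.trans_le hu.1, hu.2⟩
  have hcont : ContinuousOn F (Icc x y) := by
    have c1 : ContinuousOn (fun u => Real.log (Pγ u y)) (Icc x y) :=
      ((hγcont y hy).mono hsub).log
        (fun u hu => (hPγpos u y (hx.trans_le hu.1) hu.2).ne')
    have c2 : ContinuousOn (fun u => Real.log (P₀ u y)) (Icc x y) :=
      ((h₀cont y hy).mono hsub).log
        (fun u hu => (hP₀pos u y (hx.trans_le hu.1) hu.2).ne')
    exact c1.sub (continuousOn_const.mul c2)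
  have hderiv : ∀ u ∈ Ico x y, HasDerivWithinAt F 0 (Ici u) u := by
    intro u hu
    have hu0 : 0 < u := hx.trans_le hu.1
    have d1 := aux_deriv Pγ (fun x => lam x / (1 - γ)) hPγpos hγsemi hγexp y u hu0 hu.2
    have d2 := aux_deriv P₀ lam hP₀pos h₀semi h₀exp y u hu0 hu.2
    have d3 := d1.sub ((d2.const_mul r))
    have hval : lam u / (1 - γ) - r * lam u = 0 := by
      rw [hr]; field_simp; ring
    rw [hval] at d3
    exact d3
  have hFeq := constant_of_has_deriv_right_zero hcont hderiv y (right_mem_Icc.2 hxy)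
  have hFy : F y = 0 := by
    simp [hF, hγdiag y hy, h₀diag y hy]
  have hFx : F x = 0 := by rw [← hFeq, hFy]
  have hlogeq : Real.log (Pγ x y) = r * Real.log (P₀ x y) := by
    have := hFx
    simp only [hF] at this
    linarith
  have hp0 := hP₀pos x y hx hxy
  have hpγ := hPγpos x y hx hxy
  calc Pγ x y = Real.exp (Real.log (Pγ x y)) := (Real.exp_log hpγ).symm
    _ = Real.exp (Real.log (P₀ x y) * r) := by rw [hlogeq, mul_comm]
    _ = P₀ x y ^ r := (Real.rpow_def_of_pos hp0 r).symm
end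

section
/- Let γ < 1 be real, b ∈ ℝ, and let X : [0,∞) → ℝ be bounded above on every compact interval. Define U_t = max(0, sup_{0≤s≤t} X_s − b) and the refracted path Y_t = X_t − γ·U_t. Then for every t ≥ 0: max(b, sup_{0≤s≤t} Y_s) = b + (1−γ)·U_t. In particular, if X_0 = 0 and b = 0, then sup_{0≤s≤t} Y_s = (1−γ)·U_t. -/
open Set

/-- Key path relation for refraction from above at rate `γ < 1` starting at
level `b`: with `U_t = 0 ∨ (sup_{s ≤ t} X_s - b)` and `Y = X - γ U`, one has
`b ∨ sup_{s ≤ t} Y_s = b + (1-γ) U_t`; in particular, if `X_0 = 0` and `b = 0`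
then `sup_{s ≤ t} Y_s = (1-γ) U_t`. -/
theorem stmt_14 (γ : ℝ) (hγ : γ < 1) (b : ℝ) (X U Y : ℝ → ℝ)
    (hbdd : ∀ t : ℝ, 0 ≤ t → BddAbove (X '' Set.Icc 0 t))
    (hU : ∀ t : ℝ, U t = max 0 (sSup (X '' Set.Icc 0 t) - b))
    (hY : ∀ t : ℝ, Y t = X t - γ * U t) :
    (∀ t : ℝ, 0 ≤ t →
      max b (sSup (Y '' Set.Icc 0 t)) = b + (1 - γ) * U t) ∧
    (X 0 = 0 → b = 0 →
      ∀ t : ℝ, 0 ≤ t → sSup (Y '' Set.Icc 0 t) = (1 - γ) * U t) := by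
  -- notation
  set S : ℝ → ℝ := fun t => sSup (X '' Set.Icc 0 t) with hSdef
  have hne : ∀ t : ℝ, 0 ≤ t → (X '' Set.Icc 0 t).Nonempty := fun t ht =>
    ⟨X t, ⟨t, ⟨ht, le_refl t⟩, rfl⟩⟩
  have hXle : ∀ s : ℝ, 0 ≤ s → X s ≤ S s := fun s hs =>
    le_csSup (hbdd s hs) ⟨s, ⟨hs, le_refl s⟩, rfl⟩
  have hSmono : ∀ s t : ℝ, 0 ≤ s → s ≤ t → S s ≤ S t := by
    intro s t hs hst
    exact csSup_le_csSup (hbdd t (hs.trans hst)) (hne s hs)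
      (image_mono (f := X) (Icc_subset_Icc le_rfl hst))
  have hUnn : ∀ s : ℝ, 0 ≤ U s := by
    intro s; rw [hU s]; exact le_max_left _ _
  have hUmono : ∀ s t : ℝ, 0 ≤ s → s ≤ t → U s ≤ U t := by
    intro s t hs hst
    rw [hU s, hU t]
    exact max_le_max le_rfl (by linarith [hSmono s t hs hst])
  have hUge : ∀ s : ℝ, 0 ≤ s → X s - b ≤ U s := by
    intro s hs
    rw [hU s]
    exact le_trans (by linarith [hXle s hs]) (le_max_right _ _)
  -- pointwise bound
  have hpt : ∀ t : ℝ, 0 ≤ t → ∀ s ∈ Set.Icc (0:ℝ) t, Y s ≤ b + (1 - γ) * U t := by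
    intro t ht s hs
    have hs0 : (0:ℝ) ≤ s := hs.1
    have h1 : Y s ≤ b + (1 - γ) * U s := by
      rw [hY s]
      rcases le_or_gt (S s) b with h | h
      · have hUs : U s = 0 := by
          rw [hU s]; exact max_eq_left (by linarith)
        rw [hUs]
        have := hXle s hs0
        linarith
      · have hUs : U s = S s - b := by
          rw [hU s]; exact max_eq_right (by linarith)
        have := hXle s hs0
        rw [hUs]; linarith
    have h2 : (1 - γ) * U s ≤ (1 - γ) * U t :=
      mul_le_mul_of_nonneg_left (hUmono s t hs0 hs.2) (by linarith)
    linarith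
  have hbddY : ∀ t : ℝ, 0 ≤ t → BddAbove (Y '' Set.Icc 0 t) := by
    intro t ht
    exact ⟨b + (1 - γ) * U t, by
      rintro y ⟨s, hs, rfl⟩; exact hpt t ht s hs⟩
  have hYne : ∀ t : ℝ, 0 ≤ t → (Y '' Set.Icc 0 t).Nonempty := fun t ht =>
    ⟨Y t, ⟨t, ⟨ht, le_refl t⟩, rfl⟩⟩
  have main : ∀ t : ℝ, 0 ≤ t →
      max b (sSup (Y '' Set.Icc 0 t)) = b + (1 - γ) * U t := by
    intro t ht
    have hub : sSup (Y '' Set.Icc 0 t) ≤ b + (1 - γ) * U t := by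
      apply csSup_le (hYne t ht)
      rintro y ⟨s, hs, rfl⟩; exact hpt t ht s hs
    have hb : b ≤ b + (1 - γ) * U t := by
      nlinarith [hUnn t]
    apply le_antisymm (max_le hb hub)
    -- lower bound
    rcases le_or_gt (S t) b with h | h
    · have hUt : U t = 0 := by rw [hU t]; exact max_eq_left (by linarith)
      rw [hUt]; simp
    · have hUt : U t = S t - b := by rw [hU t]; exact max_eq_right (by linarith)
      refine le_trans ?_ (le_max_right b _)
      apply le_of_forall_pos_le_add
      intro ε hε
      set δ := ε / (1 + |γ|) with hδdef
      have hden : (0:ℝ) < 1 + |γ| := by positivity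
      have hδ : 0 < δ := div_pos hε hden
      have hδε : (1 + |γ|) * δ = ε := by
        rw [hδdef]; field_simp [hden.ne']
      obtain ⟨y, hy, hlt⟩ := exists_lt_of_lt_csSup (hne t ht)
        (show S t - δ < S t by linarith)
      obtain ⟨s, hs, rfl⟩ := hy
      have hs0 : (0:ℝ) ≤ s := hs.1
      have hYs : Y s ≤ sSup (Y '' Set.Icc 0 t) :=
        le_csSup (hbddY t ht) ⟨s, hs, rfl⟩
      have hUs_le : U s ≤ U t := hUmono s t hs0 hs.2
      have hUs_ge : X s - b ≤ U s := hUge s hs0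
      have key : b + (1 - γ) * U t ≤ Y s + ε := by
        rw [hY s, ← hδε]
        rcases le_or_gt 0 γ with hg | hg
        · have habs : |γ| = γ := abs_of_nonneg hg
          rw [habs]
          nlinarith [hUnn s]
        · have habs : |γ| = -γ := abs_of_neg hg
          rw [habs]
          nlinarith
      linarith
  refine ⟨main, ?_⟩
  intro hX0 hb t ht
  subst hb
  have hU0 : U 0 = 0 := by
    rw [hU 0]
    simp [Set.Icc_self, hX0]
  have hY0 : Y 0 = 0 := by
    rw [hY 0, hU0, hX0]; ring
  have h0le : (0:ℝ) ≤ sSup (Y '' Set.Icc 0 t) := by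
    have h := le_csSup (hbddY t ht) ⟨0, ⟨le_rfl, ht⟩, rfl⟩
    rwa [hY0] at h
  have := main t ht
  rw [max_eq_right h0le] at this
  linarith
end
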